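/- For every $n \ge 4$ there exists a finite subgroup $G \le \mathrm{GL}_n(\mathbb{C})$ such that every abelian normal subgroup $A$ of $G$ satisfies $[G : A] \ge (n+1)!$. Consequently, any function $f(n)$ for which Jordan's theorem holds must satisfy $f(n) \ge (n+1)!$ for $n \ge 4$. -/

import Mathlib

open Equiv

/-- Any normal abelian subgroup of `Perm α` with `5 ≤ card α` is trivial. -/
lemma perm_normal_comm_eq_bot {α : Type*} [DecidableEq α] [Fintype α]
    (h5 : 5 ≤ Fintype.card α) (A : Subgroup (Equiv.Perm α)) (hN : A.Normal)
    (hC : IsMulCommutative A) : A = ⊥ := by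
  haveI := hC
  -- step 1 : every nontrivial element of A is fixed-point free
  have hfix : ∀ σ ∈ A, σ ≠ 1 → ∀ c, σ c ≠ c := by
    intro σ hσ hσ1 c hc
    obtain ⟨a, ha⟩ : ∃ a, σ a ≠ a := by
      by_contra h; push_neg at h; exact hσ1 (Equiv.ext h)
    have hca : c ≠ a := fun h => ha (h ▸ hc)
    have hcb : c ≠ σ a := by
      intro h
      exact hca (σ.injective (hc.trans h))
    have hmem : Equiv.swap (σ a) c * σ * (Equiv.swap (σ a) c)⁻¹ ∈ A :=
      hN.conj_mem σ hσ _
    have hcomm : σ * (Equiv.swap (σ a) c * σ * (Equiv.swap (σ a) c)⁻¹)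
        = (Equiv.swap (σ a) c * σ * (Equiv.swap (σ a) c)⁻¹) * σ :=
      Subgroup.mul_comm_of_mem_isMulCommutative A hσ hmem
    have h2 := congrArg (fun p : Equiv.Perm α => p a) hcomm
    simp only [Equiv.Perm.mul_apply, Equiv.swap_inv] at h2
    rw [Equiv.swap_apply_of_ne_of_ne (Ne.symm ha) hca.symm] at h2
    rw [Equiv.swap_apply_left] at h2
    rw [hc, Equiv.swap_apply_right] at h2
    exact hcb h2
  -- step 2 : main argument
  by_contra hA
  obtain ⟨σ, hσ, hσ1⟩ : ∃ σ ∈ A, σ ≠ 1 := by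
    by_contra h; push_neg at h
    exact hA ((Subgroup.eq_bot_iff_forall A).mpr h)
  have hne : Nonempty α := Fintype.card_pos_iff.mp (by omega)
  obtain ⟨a⟩ := hne
  have hmoves : ∀ x, σ x ≠ x := hfix σ hσ hσ1
  have exists_avoid : ∀ s : Finset α, s.card < 5 → ∃ x, x ∉ s := by
    intro s hs
    by_contra h; push_neg at h
    have : s = Finset.univ := Finset.eq_univ_iff_forall.mpr h
    rw [this, Finset.card_univ] at hs; omega
  obtain ⟨c, hc⟩ := exists_avoid {a, σ a}
    (lt_of_le_of_lt (Finset.card_insert_le _ _) (by simp))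
  simp only [Finset.mem_insert, Finset.mem_singleton, not_or] at hc
  obtain ⟨hca, hcb⟩ := hc
  obtain ⟨e, he⟩ := exists_avoid {a, σ a, c, σ⁻¹ c} (by
    refine lt_of_le_of_lt ?_ (by norm_num : (4:ℕ) < 5)
    calc ({a, σ a, c, σ⁻¹ c} : Finset α).card
        ≤ ({σ a, c, σ⁻¹ c} : Finset α).card + 1 := Finset.card_insert_le _ _
      _ ≤ (({c, σ⁻¹ c} : Finset α).card + 1) + 1 :=
          Nat.add_le_add_right (Finset.card_insert_le _ _) 1
      _ ≤ ((({σ⁻¹ c} : Finset α).card + 1) + 1) + 1 := by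
          refine Nat.add_le_add_right (Nat.add_le_add_right ?_ 1) 1
          exact Finset.card_insert_le _ _
      _ ≤ 4 := by simp)
  simp only [Finset.mem_insert, Finset.mem_singleton, not_or] at he
  obtain ⟨hea, heb, hec, hed⟩ := he
  -- τ = (σ a  c  e) as the product of two swaps
  set τ : Equiv.Perm α := Equiv.swap (σ a) c * Equiv.swap c e with hτdef
  have hτa : τ a = a := by
    simp only [hτdef, Equiv.Perm.mul_apply]
    rw [Equiv.swap_apply_of_ne_of_ne (Ne.symm hca) (Ne.symm hea),
      Equiv.swap_apply_of_ne_of_ne (fun h => hmoves a h.symm) (Ne.symm hca)]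
  have hτinva : τ⁻¹ a = a := by
    conv_lhs => rw [← hτa]
    exact τ.symm_apply_apply a
  have hτb : τ (σ a) = c := by
    simp only [hτdef, Equiv.Perm.mul_apply]
    rw [Equiv.swap_apply_of_ne_of_ne (Ne.symm hcb) (Ne.symm heb),
      Equiv.swap_apply_left]
  have hτe : τ e = σ a := by
    simp only [hτdef, Equiv.Perm.mul_apply]
    rw [Equiv.swap_apply_right, Equiv.swap_apply_right]
  have hτinvb : τ⁻¹ (σ a) = e := by
    conv_lhs => rw [← hτe]
    exact τ.symm_apply_apply e
  have hσe : σ e ∉ ({σ a, c, e} : Finset α) := by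
    simp only [Finset.mem_insert, Finset.mem_singleton, not_or]
    refine ⟨fun h => hea (σ.injective h), fun h => hed ?_, hmoves e⟩
    · rw [← h]; exact (σ.symm_apply_apply e).symm
  simp only [Finset.mem_insert, Finset.mem_singleton, not_or] at hσe
  obtain ⟨hfa, hfc, hfe⟩ := hσe
  have hτf : τ (σ e) = σ e := by
    simp only [hτdef, Equiv.Perm.mul_apply]
    rw [Equiv.swap_apply_of_ne_of_ne hfc hfe,
      Equiv.swap_apply_of_ne_of_ne hfa hfc]
  have hmem : τ * σ * τ⁻¹ ∈ A := hN.conj_mem σ hσ τ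
  have hcomm : σ * (τ * σ * τ⁻¹) = (τ * σ * τ⁻¹) * σ :=
    Subgroup.mul_comm_of_mem_isMulCommutative A hσ hmem
  have h2 := congrArg (fun p : Equiv.Perm α => p a) hcomm
  simp only [Equiv.Perm.mul_apply] at h2
  rw [hτinva, hτb, hτinvb, hτf] at h2
  exact hec (σ.injective h2).symm

noncomputable section JordanAux

/-- The sum-of-coordinates linear functional. -/
def sumFun (m : ℕ) : (Fin m → ℂ) →ₗ[ℂ] ℂ := ∑ i, LinearMap.proj i

lemma sumFun_apply (m : ℕ) (v : Fin m → ℂ) : sumFun m v = ∑ i, v i := by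
  simp [sumFun]

/-- The standard representation space: vectors with coordinate sum zero. -/
def Vm (m : ℕ) : Submodule ℂ (Fin m → ℂ) := LinearMap.ker (sumFun m)

lemma mem_Vm {m : ℕ} (v : Fin m → ℂ) : v ∈ Vm m ↔ ∑ i, v i = 0 := by
  rw [Vm, LinearMap.mem_ker, sumFun_apply]

lemma mapVm (m : ℕ) (σ : Equiv.Perm (Fin m)) :
    (Vm m).map (LinearEquiv.funCongrLeft ℂ ℂ σ :
      (Fin m → ℂ) →ₗ[ℂ] (Fin m → ℂ)) = Vm m := by
  ext v
  rw [Submodule.mem_map_equiv]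
  simp only [LinearEquiv.funCongrLeft_symm, LinearEquiv.funCongrLeft_apply,
    LinearMap.funLeft_apply, mem_Vm]
  rw [Equiv.sum_comp σ.symm v]

/-- The representation of `Perm (Fin m)` on `Vm m`. -/
def rho1 (m : ℕ) : Equiv.Perm (Fin m) →* (Vm m ≃ₗ[ℂ] Vm m) where
  toFun σ := LinearEquiv.ofSubmodules
    (LinearEquiv.funCongrLeft ℂ ℂ (σ⁻¹ : Equiv.Perm (Fin m)))
    (Vm m) (Vm m) (mapVm m σ⁻¹)
  map_one' := by
    refine LinearEquiv.ext fun x => Subtype.ext ?_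
    simp [LinearEquiv.ofSubmodules_apply, LinearMap.funLeft_apply]
  map_mul' σ τ := by
    refine LinearEquiv.ext fun x => Subtype.ext ?_
    simp only [LinearEquiv.ofSubmodules_apply, LinearEquiv.funCongrLeft_apply,
      LinearMap.funLeft_apply]
    rfl

lemma rho1_injective (m : ℕ) : Function.Injective (rho1 m) := by
  rw [injective_iff_map_eq_one]
  intro σ hσ
  by_contra h1
  obtain ⟨a, ha⟩ : ∃ a, σ a ≠ a := by
    by_contra h; push_neg at h; exact h1 (Equiv.ext h)
  set v : Fin m → ℂ := Pi.single a 1 - Pi.single (σ a) 1 with hv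
  have hvV : v ∈ Vm m := by
    rw [mem_Vm]
    simp [hv, Finset.sum_sub_distrib, Finset.sum_pi_single']
  have h2 := congrArg
    (fun f : Vm m ≃ₗ[ℂ] Vm m => ((f ⟨v, hvV⟩ : Vm m) : Fin m → ℂ) (σ a)) hσ
  simp only [rho1, MonoidHom.coe_mk, OneHom.coe_mk,
    LinearEquiv.ofSubmodules_apply, LinearEquiv.funCongrLeft_apply,
    LinearMap.funLeft_apply] at h2
  rw [show σ⁻¹ (σ a) = a from σ.symm_apply_apply a] at h2
  have hva : v a = 1 := by
    simp [hv, Pi.single_apply, ha, Ne.symm ha]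
  have hvb : v (σ a) = -1 := by
    simp [hv, Pi.single_apply, ha, Ne.symm ha]
  rw [hva] at h2
  have : ((1 : Vm m ≃ₗ[ℂ] Vm m) ⟨v, hvV⟩ : Fin m → ℂ) (σ a) = v (σ a) := rfl
  rw [this, hvb] at h2
  norm_num at h2

lemma finrank_Vm (m : ℕ) (hm : 1 ≤ m) : Module.finrank ℂ (Vm m) = m - 1 := by
  have hsurj : Function.Surjective (sumFun m) := by
    intro c
    refine ⟨c • (Pi.single (⟨0, hm⟩ : Fin m) (1 : ℂ) : Fin m → ℂ), ?_⟩
    rw [map_smul, sumFun_apply]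
    simp [Finset.sum_pi_single']
  have h := LinearMap.finrank_range_add_finrank_ker (sumFun m)
  rw [LinearMap.range_eq_top.mpr hsurj, finrank_top] at h
  simp only [Module.finrank_self, Module.finrank_pi, Fintype.card_fin] at h
  have : Module.finrank ℂ (Vm m) = Module.finrank ℂ (LinearMap.ker (sumFun m)) := rfl
  omega

/-- A basis of `Vm (n+1)` indexed by `Fin n`. -/
def bV (n : ℕ) : Module.Basis (Fin n) ℂ (Vm (n + 1)) :=
  Module.finBasisOfFinrankEq ℂ _ (by rw [finrank_Vm (n + 1) (by omega)]; omega)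

/-- The standard representation as a map into `GL n ℂ`. -/
def rho (n : ℕ) : Equiv.Perm (Fin (n + 1)) →* Matrix.GeneralLinearGroup (Fin n) ℂ :=
  ((Units.mapEquiv (LinearMap.toMatrixAlgEquiv (bV n)).toRingEquiv.toMulEquiv).toMonoidHom.comp
    (LinearMap.GeneralLinearGroup.generalLinearEquiv ℂ (Vm (n + 1))).symm.toMonoidHom).comp
    (rho1 (n + 1))

lemma rho_injective (n : ℕ) : Function.Injective (rho n) := by
  have h1 : Function.Injective
      (Units.mapEquiv (LinearMap.toMatrixAlgEquiv (bV n)).toRingEquiv.toMulEquiv) :=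
    MulEquiv.injective _
  have h2 : Function.Injective
      (LinearMap.GeneralLinearGroup.generalLinearEquiv ℂ (Vm (n + 1))).symm :=
    MulEquiv.injective _
  have h3 := rho1_injective (n + 1)
  simp only [rho, MonoidHom.coe_comp, MulEquiv.coe_toMonoidHom]
  exact h1.comp (h2.comp h3)

end JordanAux

/-- For every `n ≥ 4` there is a finite subgroup `G ≤ GL n ℂ` all of whose
abelian normal subgroups have index at least `(n + 1)!`.  Consequently, any
bound `f` for which Jordan's theorem holds satisfies `f n ≥ (n + 1)!` for
`n ≥ 4`. -/
theorem jordan_lower_bound (n : ℕ) (hn : 4 ≤ n) :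
    (∃ G : Subgroup (Matrix.GeneralLinearGroup (Fin n) ℂ), Finite G ∧
      ∀ A : Subgroup G, A.Normal → IsMulCommutative A →
        Nat.factorial (n + 1) ≤ A.index) ∧
    (∀ f : ℕ → ℕ,
      (∀ m, 1 ≤ m → ∀ G : Subgroup (Matrix.GeneralLinearGroup (Fin m) ℂ),
        Finite G →
        ∃ A : Subgroup G, A.Normal ∧ IsMulCommutative A ∧ A.index ≤ f m) →
      Nat.factorial (n + 1) ≤ f n) := by
  have main : ∃ G : Subgroup (Matrix.GeneralLinearGroup (Fin n) ℂ), Finite G ∧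
      ∀ A : Subgroup G, A.Normal → IsMulCommutative A →
        Nat.factorial (n + 1) ≤ A.index := by
    refine ⟨(rho n).range, ?_, ?_⟩
    · exact Finite.of_surjective (rho n).rangeRestrict (rho n).rangeRestrict_surjective
    · intro A hAN hAC
      haveI := hAC
      have hinj := rho_injective n
      let e : Equiv.Perm (Fin (n + 1)) ≃* (rho n).range := MonoidHom.ofInjective hinj
      set B : Subgroup (Equiv.Perm (Fin (n + 1))) := A.comap e.toMonoidHom with hBdef
      have hBN : B.Normal := hAN.comap e.toMonoidHom
      have hBC : IsMulCommutative B := by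
        refine ⟨⟨fun x y => ?_⟩⟩
        have hx : e (x : Equiv.Perm (Fin (n + 1))) ∈ A := Subgroup.mem_comap.mp x.2
        have hy : e (y : Equiv.Perm (Fin (n + 1))) ∈ A := Subgroup.mem_comap.mp y.2
        have := Subgroup.mul_comm_of_mem_isMulCommutative A hx hy
        apply Subtype.ext
        apply e.injective
        rw [Subgroup.coe_mul, Subgroup.coe_mul, map_mul, map_mul, this]
      have hB : B = ⊥ := perm_normal_comm_eq_bot (by rw [Fintype.card_fin]; omega) B hBN hBC
      have hA : A = ⊥ := by
        rw [eq_bot_iff]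
        intro g hg
        have hm : e.symm g ∈ B := by
          rw [hBdef, Subgroup.mem_comap]
          simpa using hg
        rw [hB, Subgroup.mem_bot] at hm
        have : g = e (e.symm g) := (e.apply_symm_apply g).symm
        rw [Subgroup.mem_bot, this, hm, map_one]
      rw [hA, Subgroup.index_bot, Nat.card_congr e.toEquiv.symm,
        Nat.card_eq_fintype_card, Fintype.card_perm, Fintype.card_fin]
  refine ⟨main, fun f hf => ?_⟩
  obtain ⟨G, hGfin, hG⟩ := main
  obtain ⟨A, hAN, hAC, hAle⟩ := hf n (by omega) G hGfin
  exact (hG A hAN hAC).trans hAle
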